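/- Let q be a prime power, k ≥ 3, and S a nonempty proper subset of GF(q)^k \ {0} with dim Span(S) ≤ 2. Let D_S = (⋃_{a ∈ S} H_a) \ {0}, where H_a = {x : ⟨a,x⟩ = 0}. If D_S ≠ GF(q)^k \ {0}, then D_S is not a vectorial cutting blocking set: there exist two distinct hyperplanes H, H' with D_S ∩ H ⊆ H'. -/

import Mathlib

noncomputable def bil (F : Type) [Field F] (k : ℕ) :
    (Fin k → F) →ₗ[F] (Fin k → F) →ₗ[F] F :=
  LinearMap.mk₂ F (fun a x => ∑ i, a i * x i)
    (by intros m n x; simp [add_mul, Finset.sum_add_distrib])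
    (by intros c m x; simp [Finset.mul_sum, mul_assoc])
    (by intros m x y; simp [mul_add, Finset.sum_add_distrib])
    (by intros c m x; simp [Finset.mul_sum]; exact Finset.sum_congr rfl (by intros; ring))

lemma bil_apply {F : Type} [Field F] {k : ℕ} (a x : Fin k → F) :
    bil F k a x = ∑ i, a i * x i := rfl

lemma bil_single_left {F : Type} [Field F] [DecidableEq F] {k : ℕ} (i : Fin k) (c : F)
    (x : Fin k → F) : bil F k (Pi.single i c) x = c * x i := by
  rw [bil_apply, Finset.sum_eq_single i]
  · simp
  · intro b _ hb; simp [Pi.single_apply, hb]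
  · simp

lemma ker_bil_finrank {F : Type} [Field F] [Fintype F] [DecidableEq F] {k : ℕ}
    (e : Fin k → F) (he : e ≠ 0) :
    Module.finrank F (LinearMap.ker (bil F k e)) = k - 1 := by
  have hne : bil F k e ≠ 0 := by
    obtain ⟨i, hi⟩ := Function.ne_iff.mp he
    intro h
    apply hi
    have := congrArg (fun f => f (Pi.single i (1 : F))) h
    simp only [LinearMap.zero_apply] at this
    rw [bil_apply, Finset.sum_eq_single i] at this
    · simpa using this
    · intro b _ hb; simp [Pi.single_apply, hb]
    · simp
  have hsurj : Function.Surjective (bil F k e) := by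
    obtain ⟨x, hx⟩ : ∃ x, bil F k e x ≠ 0 := by
      by_contra h; push_neg at h; exact hne (LinearMap.ext h)
    intro c
    refine ⟨(c * (bil F k e x)⁻¹) • x, ?_⟩
    rw [map_smul]
    field_simp
    simp [smul_eq_mul, hx]
  have h1 := LinearMap.finrank_range_add_finrank_ker (bil F k e)
  rw [LinearMap.range_eq_top.mpr hsurj] at h1
  rw [finrank_top, Module.finrank_self, Module.finrank_fin_fun] at h1
  omega

theorem stmt_7 {F : Type} [Field F] [Fintype F] [DecidableEq F]
    (q k : ℕ) (hq : Fintype.card F = q) (hk : 3 ≤ k)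
    (S : Set (Fin k → F)) (hS : S.Nonempty) (hSsub : S ⊂ {x : Fin k → F | x ≠ 0})
    (hdim : Module.finrank F (Submodule.span F S) ≤ 2)
    (hne : {x : Fin k → F | x ≠ 0 ∧ ∃ a ∈ S, ∑ i, a i * x i = 0}
      ≠ {x : Fin k → F | x ≠ 0}) :
    ∃ H H' : Submodule F (Fin k → F), Module.finrank F H = k - 1 ∧
      Module.finrank F H' = k - 1 ∧ H ≠ H' ∧
      {x : Fin k → F | x ≠ 0 ∧ ∃ a ∈ S, ∑ i, a i * x i = 0} ∩ (H : Set (Fin k → F))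
        ⊆ (H' : Set (Fin k → F)) := by
  classical
  obtain ⟨v, hvN, hvD⟩ : ∃ v, v ∈ {x : Fin k → F | x ≠ 0} ∧
      v ∉ {x : Fin k → F | x ≠ 0 ∧ ∃ a ∈ S, ∑ i, a i * x i = 0} := by
    by_contra h; push_neg at h
    apply hne
    apply Set.eq_of_subset_of_subset
    · rintro x ⟨hx, _⟩; exact hx
    · exact h
  have hv0 : v ≠ 0 := hvN
  have hvS : ∀ a ∈ S, bil F k a v ≠ 0 := by
    intro a ha hsum
    exact hvD ⟨hv0, a, ha, hsum⟩
  obtain ⟨a0, ha0⟩ := hS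
  have ha0ne : a0 ≠ 0 := hSsub.1 ha0
  by_cases hcase : ∀ c ∈ S, ∃ α : F, c = α • a0
  · -- all of S lies on a line
    obtain ⟨i, hi⟩ := Function.ne_iff.mp hv0
    simp only [Pi.zero_apply] at hi
    obtain ⟨j, hji⟩ := Fintype.exists_ne_of_one_lt_card (by simp; omega) i
    set c0 : Fin k → F := Pi.single j (v i) - Pi.single i (v j) with hc0
    have hc0ne : c0 ≠ 0 := by
      intro h
      have := congrFun h j
      simp [hc0, Pi.single_apply, hji] at this
      exact hi this
    refine ⟨LinearMap.ker (bil F k c0), LinearMap.ker (bil F k a0),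
      ker_bil_finrank c0 hc0ne, ker_bil_finrank a0 ha0ne, ?_, ?_⟩
    · intro h
      have hvH : v ∈ LinearMap.ker (bil F k c0) := by
        rw [LinearMap.mem_ker, hc0, map_sub, LinearMap.sub_apply,
          bil_single_left, bil_single_left]
        ring
      rw [h, LinearMap.mem_ker] at hvH
      exact hvS a0 ha0 hvH
    · rintro x ⟨⟨hx0, c, hcS, hsum⟩, -⟩
      obtain ⟨α, hα⟩ := hcase c hcS
      have hcne : c ≠ 0 := hSsub.1 hcS
      have hαne : α ≠ 0 := by
        rintro rfl; simp at hα; exact hcne hα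
      have : bil F k c x = 0 := hsum
      rw [hα, map_smul, LinearMap.smul_apply, smul_eq_mul] at this
      have hb : bil F k a0 x = 0 := by
        rcases mul_eq_zero.mp this with h | h
        · exact absurd h hαne
        · exact h
      simpa [SetLike.mem_coe, LinearMap.mem_ker] using hb
  · -- S spans a plane
    push_neg at hcase
    obtain ⟨c, hcS, hcna⟩ := hcase
    have hcne : c ≠ 0 := hSsub.1 hcS
    have hli : LinearIndependent F ![a0, c] := by
      rw [LinearIndependent.pair_iff]
      intro s t hst
      by_cases ht : t = 0
      · subst ht
        simp at hst
        rcases hst with h | h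
        · exact ⟨h, rfl⟩
        · exact absurd h ha0ne
      · exfalso
        apply hcna (-(s * t⁻¹))
        have : t • c = -(s • a0) := by
          rw [eq_neg_iff_add_eq_zero, add_comm]; exact hst
        have := congrArg (fun y => t⁻¹ • y) this
        simp only [smul_smul, inv_mul_cancel₀ ht, one_smul, smul_neg] at this
        rw [this]
        module
    have hspan : ∀ c' ∈ S, ∃ α β : F, c' = α • a0 + β • c := by
      intro c' hc'
      have h1 : Submodule.span F ({a0, c} : Set (Fin k → F)) ≤ Submodule.span F S := by
        apply Submodule.span_le.mpr
        rintro y (rfl | rfl)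
        · exact Submodule.subset_span ha0
        · exact Submodule.subset_span hcS
      have h2 : Module.finrank F (Submodule.span F ({a0, c} : Set (Fin k → F))) = 2 := by
        have := finrank_span_eq_card hli
        simp only [Fintype.card_fin] at this
        rw [show ({a0, c} : Set (Fin k → F)) = Set.range ![a0, c] by
          simp [Matrix.range_cons, Matrix.range_empty]; exact Set.pair_comm a0 c]
        exact this
      have heq : Submodule.span F ({a0, c} : Set (Fin k → F)) = Submodule.span F S :=
        Submodule.eq_of_le_of_finrank_le h1 (by rw [h2]; exact hdim)
      have : c' ∈ Submodule.span F ({a0, c} : Set (Fin k → F)) := by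
        rw [heq]; exact Submodule.subset_span hc'
      obtain ⟨α, β, h⟩ := Submodule.mem_span_pair.mp this
      exact ⟨α, β, h.symm⟩
    set c0 : Fin k → F := (bil F k c v) • a0 - (bil F k a0 v) • c with hc0
    have hc0ne : c0 ≠ 0 := by
      intro h
      have : (bil F k c v) • a0 + (-(bil F k a0 v)) • c = 0 := by
        rw [hc0] at h
        rw [neg_smul, ← sub_eq_add_neg]
        exact h
      have := (LinearIndependent.pair_iff.mp hli _ _ this).2
      rw [neg_eq_zero] at this
      exact hvS a0 ha0 this
    refine ⟨LinearMap.ker (bil F k c0), LinearMap.ker (bil F k a0),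
      ker_bil_finrank c0 hc0ne, ker_bil_finrank a0 ha0ne, ?_, ?_⟩
    · intro h
      have hvH : v ∈ LinearMap.ker (bil F k c0) := by
        rw [LinearMap.mem_ker, hc0, map_sub, map_smul, map_smul]
        simp only [LinearMap.sub_apply, LinearMap.smul_apply, smul_eq_mul]
        ring
      rw [h, LinearMap.mem_ker] at hvH
      exact hvS a0 ha0 hvH
    · rintro x ⟨⟨hx0, c', hc'S, hsum⟩, hxH⟩
      obtain ⟨α, β, hc'⟩ := hspan c' hc'S
      have eq1 : α * (bil F k a0 x) + β * (bil F k c x) = 0 := by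
        have : bil F k c' x = 0 := hsum
        rw [hc', map_add, map_smul, map_smul] at this
        simpa using this
      have eq2 : (bil F k c v) * (bil F k a0 x) - (bil F k a0 v) * (bil F k c x) = 0 := by
        have : bil F k c0 x = 0 := hxH
        rw [hc0, map_sub, map_smul, map_smul] at this
        simpa using this
      have hvc' : α * (bil F k a0 v) + β * (bil F k c v) ≠ 0 := by
        have := hvS c' hc'S
        rw [hc', map_add, map_smul, map_smul] at this
        simpa using this
      have key : (α * (bil F k a0 v) + β * (bil F k c v)) * (bil F k a0 x) = 0 := by
        linear_combination (bil F k a0 v) * eq1 + β * eq2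
      have hb : bil F k a0 x = 0 := by
        rcases mul_eq_zero.mp key with h | h
        · exact absurd h hvc'
        · exact h
      simpa [SetLike.mem_coe, LinearMap.mem_ker] using hb
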